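/- Let K/Q_p be finite with ramification index e, F ∈ Λ_K with Weierstrass decomposition F = p^{μ}(T^{λ} + ϖ F_0)U where F_0 ∈ O_K[T] has degree < λ, ϖ is a uniformizer, and U ∈ O_K[[T]]^×. If ζ is a primitive p^n-th root of unity with λ < (p^n − p^{n−1})/e and u ∈ 1+2pZ_p, then ord_p(F(uζ − 1)) = μ + λ/(p^n − p^{n−1}). -/

import Mathlib

open IsUltrametricDist

lemma my_norm_eq_one_of_pow_eq_one {K : Type} [NormedField K] {x : K} {m : ℕ} (hm : m ≠ 0)
    (h : x ^ m = 1) : ‖x‖ = 1 := by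
  have h1 : ‖x‖ ^ m = 1 := by rw [← norm_pow, h, norm_one]
  rcases lt_trichotomy ‖x‖ 1 with hlt | heq | hgt
  · have := pow_lt_one₀ (norm_nonneg x) hlt hm
    rw [h1] at this; exact absurd this (lt_irrefl _)
  · exact heq
  · have := one_lt_pow₀ hgt hm
    rw [h1] at this; exact absurd this (lt_irrefl _)

lemma my_ultra (p : ℕ) [Fact p.Prime] (K : Type) [NormedField K] [Algebra ℚ_[p] K]
    (hnorm : ∀ x : ℚ_[p], ‖algebraMap ℚ_[p] K x‖ = ‖x‖) : IsUltrametricDist K := by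
  refine isUltrametricDist_of_forall_norm_natCast_le_one fun m => ?_
  rw [show ((m : K)) = algebraMap ℚ_[p] K (m : ℚ_[p]) by simp, hnorm]
  exact_mod_cast Padic.norm_int_le_one (p := p) (m : ℤ)

lemma my_pow_norm_sub_one (p n : ℕ) [hp : Fact p.Prime] (hn : 1 ≤ n)
    (K : Type) [NormedField K] [IsUltrametricDist K]
    (hpK : ‖(p : K)‖ = (p : ℝ)⁻¹)
    {ζ : K} (hζ : IsPrimitiveRoot ζ (p ^ n)) :
    ‖ζ - 1‖ ^ (p ^ n - p ^ (n - 1)) = (p : ℝ)⁻¹ := by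
  haveI : NeZero (p ^ n) := ⟨pow_ne_zero _ hp.out.ne_zero⟩
  have key : ∀ μ ν : K, IsPrimitiveRoot ν (p ^ n) → μ ^ (p ^ n) = 1 → ‖μ - 1‖ ≤ ‖ν - 1‖ := by
    intro μ ν hν hμ
    obtain ⟨i, -, rfl⟩ := hν.eq_pow_of_pow_eq_one hμ
    rw [← geom_sum_mul ν i, norm_mul]
    have h1 : ‖∑ k ∈ Finset.range i, ν ^ k‖ ≤ 1 := by
      refine norm_sum_le_of_forall_le_of_nonneg zero_le_one fun k _ => ?_
      rw [norm_pow, my_norm_eq_one_of_pow_eq_one (NeZero.ne _) hν.pow_eq_one, one_pow]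
    calc ‖∑ k ∈ Finset.range i, ν ^ k‖ * ‖ν - 1‖ ≤ 1 * ‖ν - 1‖ :=
          mul_le_mul_of_nonneg_right h1 (norm_nonneg _)
      _ = ‖ν - 1‖ := one_mul _
  have hprod : ∏ μ ∈ primitiveRoots (p ^ n) K, (1 - μ) = (p : K) := by
    have h2 : IsPrimitiveRoot ζ (p ^ ((n - 1) + 1)) := by rwa [Nat.sub_add_cancel hn]
    have h4 := Polynomial.eval_one_cyclotomic_prime_pow (R := K) (p := p) (n - 1)
    rw [Polynomial.cyclotomic_eq_prod_X_sub_primitiveRoots h2, Polynomial.eval_prod] at h4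
    simp only [Polynomial.eval_sub, Polynomial.eval_X, Polynomial.eval_C,
      Nat.sub_add_cancel hn] at h4 ⊢
    exact h4
  have hnorms : ∀ μ ∈ primitiveRoots (p ^ n) K, ‖1 - μ‖ = ‖ζ - 1‖ := by
    intro μ hμ
    have hμ' : IsPrimitiveRoot μ (p ^ n) := isPrimitiveRoot_of_mem_primitiveRoots hμ
    rw [norm_sub_rev]
    exact le_antisymm (key μ ζ hζ hμ'.pow_eq_one) (key ζ μ hμ' hζ.pow_eq_one)
  have hcard : (primitiveRoots (p ^ n) K).card = p ^ n - p ^ (n - 1) := by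
    rw [hζ.card_primitiveRoots, Nat.totient_prime_pow hp.out (by omega)]
    have h3 : p ^ n = p ^ (n - 1) * p := by rw [← pow_succ]; congr 1; omega
    rw [h3, Nat.mul_sub, mul_one]
  calc ‖ζ - 1‖ ^ (p ^ n - p ^ (n - 1))
      = ∏ μ ∈ primitiveRoots (p ^ n) K, ‖1 - μ‖ := by
        rw [Finset.prod_congr rfl hnorms, Finset.prod_const, hcard]
    _ = ‖(p : K)‖ := by rw [← norm_prod, hprod]
    _ = (p : ℝ)⁻¹ := hpK

/-- Let `K/ℚ_p` be finite (norm extending the `p`-adic norm), with ramification index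
`e` and uniformizer `ϖ` (`‖ϖ‖ = p^{-1/e}`).  Let `F = p^μ (T^λ + ϖ F₀) U` be a
Weierstrass decomposition: `F₀ ∈ O_K[T]` of degree `< λ` and `U ∈ O_K[[T]]ˣ`.  If `ζ` is
a primitive `p^n`-th root of unity with `λ < (p^n - p^{n-1})/e`, and `u ∈ 1 + 2pℤ_p`,
then `ord_p(F(uζ - 1)) = μ + λ/(p^n - p^{n-1})`, i.e.
`‖F(uζ - 1)‖ = p^{-(μ + λ/(p^n - p^{n-1}))}`. -/
theorem stmt_17 (p n : ℕ) [Fact p.Prime] (hn : 1 ≤ n)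
    (K : Type) [NormedField K] [Algebra ℚ_[p] K] [FiniteDimensional ℚ_[p] K]
    (hnorm : ∀ x : ℚ_[p], ‖algebraMap ℚ_[p] K x‖ = ‖x‖)
    (e : ℕ) (he : 0 < e)
    (ϖ : K) (hϖ : ‖ϖ‖ = (p : ℝ) ^ (-(1 / (e : ℝ))))
    (μ : ℤ) (lam : ℕ)
    (F0 : PowerSeries K)
    (hF0int : ∀ j, ‖PowerSeries.coeff (R := K) j F0‖ ≤ 1)
    (hF0deg : ∀ j, lam ≤ j → PowerSeries.coeff (R := K) j F0 = 0)
    (U : PowerSeries K)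
    (hUint : ∀ j, ‖PowerSeries.coeff (R := K) j U‖ ≤ 1)
    (hUunit : ‖PowerSeries.coeff (R := K) 0 U‖ = 1)
    (F : PowerSeries K)
    (hF : F = PowerSeries.C (R := K) ((p : K) ^ μ) *
      (PowerSeries.X ^ lam + PowerSeries.C (R := K) ϖ * F0) * U)
    (ζ : K) (hζ : IsPrimitiveRoot ζ (p ^ n))
    (hlam : (lam : ℝ) < ((p ^ n - p ^ (n - 1) : ℕ) : ℝ) / (e : ℝ))
    (u : ℤ_[p]) (hu : ∃ t : ℤ_[p], u = 1 + 2 * p * t) :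
    ‖∑' j : ℕ, PowerSeries.coeff (R := K) j F *
        (algebraMap ℚ_[p] K (u : ℚ_[p]) * ζ - 1) ^ j‖ =
      (p : ℝ) ^ (-((μ : ℝ) + (lam : ℝ) / ((p ^ n - p ^ (n - 1) : ℕ) : ℝ))) := by
  classical
  obtain ⟨t, ht⟩ := hu
  have hp : Fact p.Prime := inferInstance
  haveI hK : IsUltrametricDist K := my_ultra p K hnorm
  letI ns : NormedSpace ℚ_[p] K :=
    { toModule := inferInstance,
      norm_smul_le := fun c y => le_of_eq (by rw [Algebra.smul_def, norm_mul, hnorm]) }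
  haveI : CompleteSpace K := FiniteDimensional.complete ℚ_[p] K
  have hp1 : (1 : ℝ) < p := by exact_mod_cast hp.out.one_lt
  have hp0 : (0 : ℝ) < p := zero_lt_one.trans hp1
  set q : ℕ := p ^ n - p ^ (n - 1) with hqdef
  have hq0 : 0 < q := by
    have : p ^ (n - 1) < p ^ n := Nat.pow_lt_pow_right hp.out.one_lt (by omega)
    omega
  have hqR : (0 : ℝ) < (q : ℝ) := by exact_mod_cast hq0
  have hpK : ‖(p : K)‖ = (p : ℝ)⁻¹ := by
    rw [show ((p : K)) = algebraMap ℚ_[p] K (p : ℚ_[p]) by simp, hnorm, Padic.norm_p]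
  have hzeta : ‖ζ - 1‖ ^ q = (p : ℝ)⁻¹ := my_pow_norm_sub_one p n hn K hpK hζ
  set c : ℝ := (p : ℝ) ^ (-(1 / (q : ℝ))) with hcdef
  have hc0 : 0 < c := Real.rpow_pos_of_pos hp0 _
  have hc1 : c < 1 := by
    apply Real.rpow_lt_one_of_one_lt_of_neg hp1
    rw [neg_lt, neg_zero]
    positivity
  have hz : ‖ζ - 1‖ = c := by
    have h1 : ‖ζ - 1‖ = ((p : ℝ)⁻¹) ^ ((q : ℝ)⁻¹) := by
      rw [← hzeta, ← Real.rpow_natCast (‖ζ - 1‖) q, ← Real.rpow_mul (norm_nonneg _),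
        mul_inv_cancel₀ (ne_of_gt hqR), Real.rpow_one]
    rw [h1, hcdef, ← Real.rpow_neg_one (p : ℝ), ← Real.rpow_mul hp0.le]
    congr 1
    field_simp
  -- the point of evaluation
  set x : K := algebraMap ℚ_[p] K (u : ℚ_[p]) * ζ - 1 with hxdef
  set a : K := algebraMap ℚ_[p] K (u : ℚ_[p]) with hadef
  have ha1 : ‖a - 1‖ < c := by
    have h1 : a - 1 = algebraMap ℚ_[p] K ((u : ℚ_[p]) - 1) := by rw [map_sub, map_one]
    have h2 : ((u : ℚ_[p]) - 1) = (((2 * p * t : ℤ_[p]) : ℚ_[p])) := by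
      rw [ht]; push_cast; ring
    have h3 : ‖a - 1‖ ≤ ‖(2 : ℤ_[p])‖ * (p : ℝ)⁻¹ := by
      rw [h1, hnorm, h2, PadicInt.padic_norm_e_of_padicInt, norm_mul,
        norm_mul, PadicInt.norm_p]
      calc ‖(2 : ℤ_[p])‖ * (p : ℝ)⁻¹ * ‖t‖ ≤ ‖(2 : ℤ_[p])‖ * (p : ℝ)⁻¹ * 1 :=
            mul_le_mul_of_nonneg_left t.norm_le_one (by positivity)
        _ = ‖(2 : ℤ_[p])‖ * (p : ℝ)⁻¹ := mul_one _
    refine lt_of_le_of_lt h3 ?_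
    by_cases hp2 : p = 2
    · subst hp2
      rw [show ((2 : ℤ_[2])) = (((2 : ℕ) : ℤ_[2])) by norm_num, PadicInt.norm_p]
      have h4 : ((2 : ℕ) : ℝ)⁻¹ * ((2 : ℕ) : ℝ)⁻¹ = ((2 : ℕ) : ℝ) ^ (-2 : ℝ) := by
        rw [show (-2 : ℝ) = (-1) + (-1) by norm_num, Real.rpow_add (by norm_num),
          Real.rpow_neg_one]
      rw [h4, hcdef]
      apply (Real.rpow_lt_rpow_left_iff (by exact_mod_cast one_lt_two)).mpr
      rw [neg_lt_neg_iff]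
      have h5 : (1 : ℝ) / q ≤ 1 := by
        rw [div_le_one hqR]; exact_mod_cast hq0
      linarith
    · have h5 : ‖(2 : ℤ_[p])‖ ≤ 1 := PadicInt.norm_le_one _
      have h6 : ‖(2 : ℤ_[p])‖ * (p : ℝ)⁻¹ ≤ (p : ℝ)⁻¹ := by
        calc ‖(2 : ℤ_[p])‖ * (p : ℝ)⁻¹ ≤ 1 * (p : ℝ)⁻¹ :=
              mul_le_mul_of_nonneg_right h5 (by positivity)
          _ = (p : ℝ)⁻¹ := one_mul _
      refine lt_of_le_of_lt h6 ?_
      rw [hcdef, ← Real.rpow_neg_one (p : ℝ)]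
      apply (Real.rpow_lt_rpow_left_iff hp1).mpr
      rw [neg_lt_neg_iff]
      have hq2 : 2 ≤ q := by
        have h3' : p ^ n = p ^ (n - 1) * p := by rw [← pow_succ]; congr 1; omega
        have hq' : q = p ^ (n - 1) * (p - 1) := by
          rw [hqdef, h3', Nat.mul_sub, mul_one]
        have hp3 : 3 ≤ p := by
          have := hp.out.two_le; omega
        have h1p : 1 ≤ p ^ (n - 1) := Nat.one_le_pow _ _ hp.out.pos
        calc 2 ≤ p - 1 := by omega
          _ = 1 * (p - 1) := (one_mul _).symm
          _ ≤ p ^ (n - 1) * (p - 1) := Nat.mul_le_mul_right _ h1p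
          _ = q := hq'.symm
      rw [div_lt_one hqR]
      exact_mod_cast hq2
  have hanorm : ‖a‖ = 1 := by
    have h1 : a = 1 + (a - 1) := by ring
    rw [h1, norm_add_eq_max_of_norm_ne_norm (by rw [norm_one]; exact ne_of_gt (ha1.trans hc1)),
      norm_one]
    exact max_eq_left (ha1.trans hc1).le
  have hxnorm : ‖x‖ = c := by
    have h1 : x = a * (ζ - 1) + (a - 1) := by rw [hxdef, hadef]; ring
    have h2 : ‖a * (ζ - 1)‖ = c := by rw [norm_mul, hanorm, one_mul, hz]
    rw [h1, norm_add_eq_max_of_norm_ne_norm (by rw [h2]; exact ne_of_gt ha1), h2]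
    exact max_eq_left ha1.le
  -- power series evaluation
  have hxj : ∀ j : ℕ, ‖x ^ j‖ = c ^ j := fun j => by rw [norm_pow, hxnorm]
  have hsumm : ∀ (g : PowerSeries K) (B : ℝ), (∀ j, ‖PowerSeries.coeff (R := K) j g‖ ≤ B) →
      Summable (fun j => ‖PowerSeries.coeff (R := K) j g * x ^ j‖) := by
    intro g B hB
    refine Summable.of_nonneg_of_le (fun j => norm_nonneg _) (fun j => ?_)
      ((summable_geometric_of_lt_one hc0.le hc1).mul_left B)
    rw [norm_mul, hxj]
    exact mul_le_mul_of_nonneg_right (hB j) (pow_nonneg hc0.le j)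
  set G : PowerSeries K := PowerSeries.X ^ lam + PowerSeries.C (R := K) ϖ * F0 with hGdef
  have hϖ1 : ‖ϖ‖ ≤ 1 := by
    rw [hϖ]
    apply Real.rpow_le_one_of_one_le_of_nonpos (by exact_mod_cast hp.out.one_le)
    rw [neg_nonpos]
    positivity
  have hGint : ∀ j, ‖PowerSeries.coeff (R := K) j G‖ ≤ 1 := by
    intro j
    rw [hGdef, map_add, PowerSeries.coeff_C_mul]
    refine (norm_add_le_max _ _).trans (max_le ?_ ?_)
    · rw [PowerSeries.coeff_X_pow]
      split <;> simp
    · calc ‖ϖ * PowerSeries.coeff (R := K) j F0‖ = ‖ϖ‖ * ‖PowerSeries.coeff (R := K) j F0‖ := norm_mul _ _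
        _ ≤ 1 * 1 := mul_le_mul hϖ1 (hF0int j) (norm_nonneg _) zero_le_one
        _ = 1 := one_mul _
  set SU : K := ∑' j : ℕ, PowerSeries.coeff (R := K) j U * x ^ j with hSUdef
  set SF0 : K := ∑' j : ℕ, PowerSeries.coeff (R := K) j F0 * x ^ j with hSF0def
  set SG : K := ∑' j : ℕ, PowerSeries.coeff (R := K) j G * x ^ j with hSGdef
  have hsummU : Summable (fun j => PowerSeries.coeff (R := K) j U * x ^ j) :=
    (hsumm U 1 hUint).of_norm
  have hsummF0 : Summable (fun j => PowerSeries.coeff (R := K) j F0 * x ^ j) :=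
    (hsumm F0 1 hF0int).of_norm
  have hGU : (∑' m : ℕ, PowerSeries.coeff (R := K) m (G * U) * x ^ m) = SG * SU := by
    rw [hSGdef, hSUdef,
      tsum_mul_tsum_eq_tsum_sum_antidiagonal_of_summable_norm (hsumm G 1 hGint)
        (hsumm U 1 hUint)]
    refine tsum_congr fun m => ?_
    rw [PowerSeries.coeff_mul, Finset.sum_mul]
    refine Finset.sum_congr rfl fun kl hkl => ?_
    rw [Finset.HasAntidiagonal.mem_antidiagonal] at hkl
    rw [← hkl, pow_add]; ring
  have hFsplit : (∑' j : ℕ, PowerSeries.coeff (R := K) j F * x ^ j) = (p : K) ^ μ * (SG * SU) := by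
    have hassoc : F = PowerSeries.C (R := K) ((p : K) ^ μ) * (G * U) := by rw [hF, hGdef, mul_assoc]
    calc (∑' j : ℕ, PowerSeries.coeff (R := K) j F * x ^ j)
        = ∑' j : ℕ, (p : K) ^ μ * (PowerSeries.coeff (R := K) j (G * U) * x ^ j) := by
          refine tsum_congr fun j => ?_
          rw [hassoc, PowerSeries.coeff_C_mul]; ring
      _ = (p : K) ^ μ * ∑' j : ℕ, PowerSeries.coeff (R := K) j (G * U) * x ^ j := tsum_mul_left
      _ = (p : K) ^ μ * (SG * SU) := by rw [hGU]
  have hSF0norm : ‖SF0‖ ≤ 1 := by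
    refine norm_tsum_le_of_forall_le_of_nonneg zero_le_one fun j => ?_
    rw [norm_mul, hxj]
    calc ‖PowerSeries.coeff (R := K) j F0‖ * c ^ j ≤ 1 * 1 :=
          mul_le_mul (hF0int j) (pow_le_one₀ hc0.le hc1.le) (by positivity) zero_le_one
      _ = 1 := one_mul _
  have hSG : SG = x ^ lam + ϖ * SF0 := by
    have h1 : ∀ j : ℕ, PowerSeries.coeff (R := K) j G * x ^ j
        = PowerSeries.coeff (R := K) j (PowerSeries.X ^ lam) * x ^ j
          + ϖ * (PowerSeries.coeff (R := K) j F0 * x ^ j) := by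
      intro j
      rw [hGdef, map_add, PowerSeries.coeff_C_mul]; ring
    rw [hSGdef, tsum_congr h1, Summable.tsum_add ((hsumm (PowerSeries.X ^ lam) 1 ?_).of_norm)
      (hsummF0.mul_left ϖ)]
    · congr 1
      · rw [tsum_eq_single lam ?_]
        · rw [PowerSeries.coeff_X_pow, if_pos rfl, one_mul]
        · intro j hj
          rw [PowerSeries.coeff_X_pow, if_neg hj, zero_mul]
      · rw [hSF0def, tsum_mul_left]
    · intro j
      rw [PowerSeries.coeff_X_pow]
      split <;> simp
  have hxlam : ‖x ^ lam‖ = (p : ℝ) ^ (-((lam : ℝ) / (q : ℝ))) := by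
    rw [hxj, hcdef, ← Real.rpow_natCast ((p : ℝ) ^ (-(1 / (q : ℝ)))) lam,
      ← Real.rpow_mul hp0.le]
    congr 1
    field_simp
  have hphi_lt : ‖ϖ * SF0‖ < ‖x ^ lam‖ := by
    rw [hxlam]
    calc ‖ϖ * SF0‖ = ‖ϖ‖ * ‖SF0‖ := norm_mul _ _
      _ ≤ ‖ϖ‖ * 1 := mul_le_mul_of_nonneg_left hSF0norm (norm_nonneg _)
      _ = (p : ℝ) ^ (-(1 / (e : ℝ))) := by rw [mul_one, hϖ]
      _ < (p : ℝ) ^ (-((lam : ℝ) / (q : ℝ))) := by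
          apply (Real.rpow_lt_rpow_left_iff hp1).mpr
          rw [neg_lt_neg_iff, div_lt_div_iff₀ hqR (by exact_mod_cast he)]
          rw [one_mul]
          exact (lt_div_iff₀ (by exact_mod_cast he : (0:ℝ) < (e:ℝ))).mp hlam
  have hSGnorm : ‖SG‖ = (p : ℝ) ^ (-((lam : ℝ) / (q : ℝ))) := by
    rw [hSG, norm_add_eq_max_of_norm_ne_norm (ne_of_gt hphi_lt), hxlam]
    rw [hxlam] at hphi_lt
    exact max_eq_left hphi_lt.le
  have hSUnorm : ‖SU‖ = 1 := by
    rw [hSUdef, Summable.tsum_eq_zero_add hsummU]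
    have htail : ‖∑' j : ℕ, PowerSeries.coeff (R := K) (j + 1) U * x ^ (j + 1)‖ ≤ c := by
      refine norm_tsum_le_of_forall_le_of_nonneg hc0.le fun j => ?_
      rw [norm_mul, hxj]
      calc ‖PowerSeries.coeff (R := K) (j + 1) U‖ * c ^ (j + 1) ≤ 1 * c ^ (j + 1) :=
            mul_le_mul_of_nonneg_right (hUint _) (by positivity)
        _ = c ^ (j + 1) := one_mul _
        _ ≤ c := pow_le_of_le_one hc0.le hc1.le (Nat.succ_ne_zero j)
    have hhead : ‖PowerSeries.coeff (R := K) 0 U * x ^ 0‖ = 1 := by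
      rw [pow_zero, mul_one, hUunit]
    rw [norm_add_eq_max_of_norm_ne_norm
      (by rw [hhead]; exact ne_of_gt (lt_of_le_of_lt htail hc1)), hhead]
    exact max_eq_left (htail.trans hc1.le)
  rw [hFsplit, norm_mul, norm_mul, norm_zpow, hpK, hSGnorm, hSUnorm, mul_one]
  have h7 : ((p : ℝ)⁻¹) ^ μ = (p : ℝ) ^ ((- μ : ℤ) : ℝ) := by
    rw [inv_zpow, ← zpow_neg, Real.rpow_intCast]
  rw [h7, ← Real.rpow_add hp0]
  congr 1
  push_cast
  ring
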